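/- If d ≡ 4 (mod 6), d ≥ 10, and m(Q_{d-4};4) ≤ ((d-4)((d-4)^2+3(d-4)+14))/24 + 1, and there exist nested sets S_1 ⊆ S_2 ⊆ S_3 in Q_{d-4} percolating for the 1-, 2- and 3-neighbour processes respectively with |S_1| = 1, |S_2| = (d-4)/2 + 1, |S_3| = (d-4)(d-1)/6 + 1, then m(Q_d;4) ≤ d(d^2+3d+14)/24 + 1. -/

import Mathlib

open Finset

/-- One step of the r-neighbour bootstrap process on the d-dimensional hypercube
(vertices: `Fin d → Bool`, adjacency: Hamming distance 1). -/
def bootStep (d r : ℕ) (A : Finset (Fin d → Bool)) : Finset (Fin d → Bool) :=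
  A ∪ Finset.univ.filter (fun v =>
    r ≤ ((Finset.univ.filter (fun w => hammingDist v w = 1)) ∩ A).card)

/-- `A` percolates under the r-neighbour bootstrap process on `Q_d`. -/
def Percolates (d r : ℕ) (A : Finset (Fin d → Bool)) : Prop :=
  ∃ t : ℕ, (bootStep d r)^[t] A = Finset.univ

/-- `m(Q_d; r)`: minimum cardinality of a percolating set. -/
noncomputable def mQ (d r : ℕ) : ℕ :=
  sInf {n : ℕ | ∃ A : Finset (Fin d → Bool), A.card = n ∧ Percolates d r A}

namespace BootPf

variable {d r : ℕ}

lemma subset_bootStep (A : Finset (Fin d → Bool)) : A ⊆ bootStep d r A :=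
  Finset.subset_union_left

lemma iterate_subset (A : Finset (Fin d → Bool)) {s t : ℕ} (h : s ≤ t) :
    (bootStep d r)^[s] A ⊆ (bootStep d r)^[t] A := by
  induction t with
  | zero => simp_all
  | succ t ih =>
    rcases Nat.eq_or_lt_of_le h with h' | h'
    · subst h'; exact subset_rfl
    · rw [Function.iterate_succ_apply']
      exact (ih (Nat.lt_succ_iff.mp h')).trans (subset_bootStep _)

def inf (d r : ℕ) (A : Finset (Fin d → Bool)) (v : Fin d → Bool) : Prop :=
  ∃ t, v ∈ (bootStep d r)^[t] A

lemma inf_of_mem {A : Finset (Fin d → Bool)} {v : Fin d → Bool} (h : v ∈ A) :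
    inf d r A v := ⟨0, h⟩

lemma exists_time {A : Finset (Fin d → Bool)} (N : Finset (Fin d → Bool))
    (h : ∀ w ∈ N, inf d r A w) : ∃ t, N ⊆ (bootStep d r)^[t] A := by
  classical
  induction N using Finset.induction with
  | empty => exact ⟨0, by simp⟩
  | insert _ _ hx ih =>
    obtain ⟨t1, ht1⟩ := ih (fun w hw => h w (mem_insert_of_mem hw))
    obtain ⟨t2, ht2⟩ := h _ (mem_insert_self _ _)
    exact ⟨max t1 t2, insert_subset ((iterate_subset A (le_max_right _ _)) ht2)
      (ht1.trans (iterate_subset A (le_max_left _ _)))⟩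

lemma inf_step {A : Finset (Fin d → Bool)} {v : Fin d → Bool} (N : Finset (Fin d → Bool))
    (hadj : ∀ w ∈ N, hammingDist v w = 1) (hcard : r ≤ N.card)
    (hinf : ∀ w ∈ N, inf d r A w) : inf d r A v := by
  obtain ⟨t, ht⟩ := exists_time N hinf
  refine ⟨t + 1, ?_⟩
  rw [Function.iterate_succ_apply']
  apply Finset.mem_union_right
  rw [Finset.mem_filter]
  refine ⟨mem_univ _, le_trans hcard (Finset.card_le_card ?_)⟩
  intro w hw
  exact Finset.mem_inter.mpr ⟨Finset.mem_filter.mpr ⟨mem_univ _, hadj w hw⟩, ht hw⟩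

lemma percolates_of_forall {A : Finset (Fin d → Bool)} (h : ∀ v, inf d r A v) :
    Percolates d r A := by
  obtain ⟨t, ht⟩ := exists_time Finset.univ (fun v _ => h v)
  exact ⟨t, Finset.univ_subset_iff.mp ht⟩

variable {n : ℕ}

def glue (u : Fin n → Bool) (x : Fin 4 → Bool) : Fin (n + 4) → Bool := Fin.append u x

lemma hammingDist_eq_sum {m : ℕ} (v w : Fin m → Bool) :
    hammingDist v w = ∑ i, if v i ≠ w i then 1 else 0 := by
  rw [hammingDist, Finset.card_filter]

lemma hammingDist_glue (u u' : Fin n → Bool) (x x' : Fin 4 → Bool) :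
    hammingDist (glue u x) (glue u' x') = hammingDist u u' + hammingDist x x' := by
  simp only [hammingDist_eq_sum, glue]
  rw [Fin.sum_univ_add]
  congr 1
  · exact Finset.sum_congr rfl fun i _ => by rw [Fin.append_left, Fin.append_left]
  · exact Finset.sum_congr rfl fun i _ => by rw [Fin.append_right, Fin.append_right]

lemma glue_inj {u u' : Fin n → Bool} {x x' : Fin 4 → Bool} (h : glue u x = glue u' x') :
    u = u' ∧ x = x' := by
  have h0 : hammingDist (glue u x) (glue u' x') = 0 := by rw [h, hammingDist_self]
  rw [hammingDist_glue] at h0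
  exact ⟨hammingDist_eq_zero.mp (by omega), hammingDist_eq_zero.mp (by omega)⟩

lemma adj_glue_left {u u' : Fin n → Bool} (x : Fin 4 → Bool) (h : hammingDist u u' = 1) :
    hammingDist (glue u x) (glue u' x) = 1 := by
  rw [hammingDist_glue, hammingDist_self, h]

lemma adj_glue_right (u : Fin n → Bool) {x x' : Fin 4 → Bool} (h : hammingDist x x' = 1) :
    hammingDist (glue u x) (glue u x') = 1 := by
  rw [hammingDist_glue, hammingDist_self, h]

/-- Engine lemma: if a subcube `x` carries seeds `S` percolating at threshold `r'`, and has
`4 - r'` fully-infected neighbouring subcubes, then subcube `x` becomes fully infected. -/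
lemma engine {A : Finset (Fin (n + 4) → Bool)} {x : Fin 4 → Bool}
    {S : Finset (Fin n → Bool)} {r' : ℕ} (hS : Percolates n r' S)
    (F : Finset (Fin 4 → Bool)) (hadj : ∀ y ∈ F, hammingDist x y = 1)
    (hcard : 4 ≤ r' + F.card)
    (hseed : ∀ u ∈ S, inf (n + 4) 4 A (glue u x))
    (hfull : ∀ y ∈ F, ∀ u', inf (n + 4) 4 A (glue u' y)) :
    ∀ u, inf (n + 4) 4 A (glue u x) := by
  classical
  obtain ⟨T, hT⟩ := hS
  have main : ∀ t, ∀ u ∈ (bootStep n r')^[t] S, inf (n + 4) 4 A (glue u x) := by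
    intro t
    induction t with
    | zero => exact hseed
    | succ t ih =>
      intro u hu
      rw [Function.iterate_succ_apply'] at hu
      rcases Finset.mem_union.mp hu with h | h
      · exact ih u h
      · obtain ⟨-, hr⟩ := Finset.mem_filter.mp h
        set M := (Finset.univ.filter fun w => hammingDist u w = 1) ∩ (bootStep n r')^[t] S
          with hM
        have inj1 : Function.Injective (fun w : Fin n → Bool => glue w x) :=
          fun a b hab => (glue_inj hab).1
        have inj2 : Function.Injective (fun y : Fin 4 → Bool => glue u y) :=
          fun a b hab => (glue_inj hab).2
        apply inf_step (M.image (fun w : Fin n → Bool => glue w x) ∪ F.image (fun y => glue u y))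
        · intro w hw
          rcases Finset.mem_union.mp hw with hw | hw
          · obtain ⟨w', hw', rfl⟩ := Finset.mem_image.mp hw
            have h1 : hammingDist u w' = 1 :=
              (Finset.mem_filter.mp (Finset.mem_inter.mp hw').1).2
            exact adj_glue_left x h1
          · obtain ⟨y, hy, rfl⟩ := Finset.mem_image.mp hw
            exact adj_glue_right u (hadj y hy)
        · have hdis : Disjoint (M.image (fun w => glue w x)) (F.image (fun y => glue u y)) := by
            rw [Finset.disjoint_left]
            rintro a ha1 ha2
            obtain ⟨w', _, rfl⟩ := Finset.mem_image.mp ha1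
            obtain ⟨y, hy, hEq⟩ := Finset.mem_image.mp ha2
            have hxy : x = y := (glue_inj hEq.symm).2
            have h1 := hadj y hy
            rw [← hxy, hammingDist_self] at h1
            omega
          rw [Finset.card_union_of_disjoint hdis,
            Finset.card_image_of_injective _ inj1, Finset.card_image_of_injective _ inj2]
          omega
        · intro w hw
          rcases Finset.mem_union.mp hw with hw | hw
          · obtain ⟨w', hw', rfl⟩ := Finset.mem_image.mp hw
            exact ih w' (Finset.mem_inter.mp hw').2
          · obtain ⟨y, hy, rfl⟩ := Finset.mem_image.mp hw
            exact hfull y hy u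
  intro u
  apply main T
  rw [hT]
  exact Finset.mem_univ u

/-- Token lemma: if all four neighbouring subcubes of `x` contain an infected aligned
copy of `S`, then subcube `x` contains an infected copy of `S`. -/
lemma token {A : Finset (Fin (n + 4) → Bool)} {x y0 y1 y2 y3 : Fin 4 → Bool}
    {S : Finset (Fin n → Bool)}
    (hd : ({y0, y1, y2, y3} : Finset (Fin 4 → Bool)).card = 4)
    (ha0 : hammingDist x y0 = 1) (ha1 : hammingDist x y1 = 1)
    (ha2 : hammingDist x y2 = 1) (ha3 : hammingDist x y3 = 1)
    (h0 : ∀ u ∈ S, inf (n + 4) 4 A (glue u y0))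
    (h1 : ∀ u ∈ S, inf (n + 4) 4 A (glue u y1))
    (h2 : ∀ u ∈ S, inf (n + 4) 4 A (glue u y2))
    (h3 : ∀ u ∈ S, inf (n + 4) 4 A (glue u y3)) :
    ∀ u ∈ S, inf (n + 4) 4 A (glue u x) := by
  classical
  intro u hu
  have inj2 : Function.Injective (fun y => glue u y) := fun a b hab => (glue_inj hab).2
  apply inf_step (({y0, y1, y2, y3} : Finset (Fin 4 → Bool)).image (fun y => glue u y))
  · intro w hw
    obtain ⟨y, hy, rfl⟩ := Finset.mem_image.mp hw
    simp only [Finset.mem_insert, Finset.mem_singleton] at hy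
    rcases hy with rfl | rfl | rfl | rfl
    · exact adj_glue_right u ha0
    · exact adj_glue_right u ha1
    · exact adj_glue_right u ha2
    · exact adj_glue_right u ha3
  · rw [Finset.card_image_of_injective _ inj2, hd]
  · intro w hw
    obtain ⟨y, hy, rfl⟩ := Finset.mem_image.mp hw
    simp only [Finset.mem_insert, Finset.mem_singleton] at hy
    rcases hy with rfl | rfl | rfl | rfl
    · exact h0 u hu
    · exact h1 u hu
    · exact h2 u hu
    · exact h3 u hu

lemma singleton_perc (n : ℕ) (u0 : Fin n → Bool) : Percolates n 1 {u0} := by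
  classical
  apply percolates_of_forall
  intro v
  generalize h : hammingDist v u0 = k
  induction k using Nat.strong_induction_on generalizing v with
  | _ k ih =>
    rcases Nat.eq_zero_or_pos k with rfl | hk
    · have : v = u0 := hammingDist_eq_zero.mp h
      exact inf_of_mem (by simp [this])
    · have hne : v ≠ u0 := by
        intro he; rw [he, hammingDist_self] at h; omega
      obtain ⟨i, hi⟩ : ∃ i, v i ≠ u0 i := Function.ne_iff.mp hne
      set w := Function.update v i (u0 i) with hwdef
      have hvw : hammingDist v w = 1 := by
        have hfil : (Finset.univ.filter fun j => v j ≠ w j) = {i} := by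
          ext j
          simp only [Finset.mem_filter, Finset.mem_univ, true_and, Finset.mem_singleton,
            hwdef, Function.update_apply]
          by_cases hj : j = i
          · subst hj; simp [hi]
          · simp [hj]
        rw [hammingDist, hfil, Finset.card_singleton]
      have hwu : hammingDist w u0 < k := by
        have hsub : (Finset.univ.filter fun j => w j ≠ u0 j) ⊂
            (Finset.univ.filter fun j => v j ≠ u0 j) := by
          constructor
          · intro j hj
            simp only [Finset.mem_filter, Finset.mem_univ, true_and, hwdef,
              Function.update_apply] at hj ⊢
            by_cases hji : j = i
            · subst hji; simp at hj
            · simpa [hji] using hj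
          · intro hsup
            have hiL := hsup (Finset.mem_filter.mpr ⟨Finset.mem_univ i, hi⟩)
            simp only [Finset.mem_filter, hwdef, Function.update_apply] at hiL
            simp at hiL
        calc hammingDist w u0 < hammingDist v u0 := Finset.card_lt_card hsub
        _ = k := h
      exact inf_step {w} (by simp [hvw]) (by simp)
        (fun w' hw' => by
          rw [Finset.mem_singleton] at hw'
          subst hw'
          exact ih _ hwu w rfl)

lemma empty_perc (n : ℕ) : Percolates n 0 (∅ : Finset (Fin n → Bool)) := by
  refine ⟨1, ?_⟩
  simp [bootStep, Finset.filter_true_of_mem, Nat.zero_le]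


set_option maxHeartbeats 1000000 in
lemma construct (n : ℕ) (T S₁ S₂ S₃ : Finset (Fin n → Bool))
    (hT : Percolates n 4 T)
    (hP1 : Percolates n 1 S₁) (hP2 : Percolates n 2 S₂) (hP3 : Percolates n 3 S₃) :
    ∃ A : Finset (Fin (n + 4) → Bool),
      A.card ≤ T.card + 3 * S₃.card + 3 * S₂.card + S₁.card ∧ Percolates (n + 4) 4 A := by
  classical
  set A := T.image (fun u => glue u ![false, false, false, false]) ∪ S₃.image (fun u => glue u ![true, true, false, false]) ∪ S₃.image (fun u => glue u ![true, false, true, false]) ∪ S₃.image (fun u => glue u ![true, false, false, true]) ∪ S₂.image (fun u => glue u ![false, true, true, false]) ∪ S₂.image (fun u => glue u ![false, true, false, true]) ∪ S₂.image (fun u => glue u ![false, false, true, true]) ∪ S₁.image (fun u => glue u ![true, true, true, true]) with hA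
  refine ⟨A, ?_, ?_⟩
  · rw [hA]
    have c2 : (T.image (fun u => glue u ![false, false, false, false]) ∪ S₃.image (fun u => glue u ![true, true, false, false])).card ≤ T.card + S₃.card :=
      le_trans (Finset.card_union_le _ _) (Nat.add_le_add Finset.card_image_le Finset.card_image_le)
    have c3 : (T.image (fun u => glue u ![false, false, false, false]) ∪ S₃.image (fun u => glue u ![true, true, false, false]) ∪ S₃.image (fun u => glue u ![true, false, true, false])).card ≤ T.card + S₃.card + S₃.card :=
      le_trans (Finset.card_union_le _ _) (Nat.add_le_add c2 Finset.card_image_le)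
    have c4 : (T.image (fun u => glue u ![false, false, false, false]) ∪ S₃.image (fun u => glue u ![true, true, false, false]) ∪ S₃.image (fun u => glue u ![true, false, true, false]) ∪ S₃.image (fun u => glue u ![true, false, false, true])).card ≤ T.card + S₃.card + S₃.card + S₃.card :=
      le_trans (Finset.card_union_le _ _) (Nat.add_le_add c3 Finset.card_image_le)
    have c5 : (T.image (fun u => glue u ![false, false, false, false]) ∪ S₃.image (fun u => glue u ![true, true, false, false]) ∪ S₃.image (fun u => glue u ![true, false, true, false]) ∪ S₃.image (fun u => glue u ![true, false, false, true]) ∪ S₂.image (fun u => glue u ![false, true, true, false])).card ≤ T.card + S₃.card + S₃.card + S₃.card + S₂.card :=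
      le_trans (Finset.card_union_le _ _) (Nat.add_le_add c4 Finset.card_image_le)
    have c6 : (T.image (fun u => glue u ![false, false, false, false]) ∪ S₃.image (fun u => glue u ![true, true, false, false]) ∪ S₃.image (fun u => glue u ![true, false, true, false]) ∪ S₃.image (fun u => glue u ![true, false, false, true]) ∪ S₂.image (fun u => glue u ![false, true, true, false]) ∪ S₂.image (fun u => glue u ![false, true, false, true])).card ≤ T.card + S₃.card + S₃.card + S₃.card + S₂.card + S₂.card :=
      le_trans (Finset.card_union_le _ _) (Nat.add_le_add c5 Finset.card_image_le)
    have c7 : (T.image (fun u => glue u ![false, false, false, false]) ∪ S₃.image (fun u => glue u ![true, true, false, false]) ∪ S₃.image (fun u => glue u ![true, false, true, false]) ∪ S₃.image (fun u => glue u ![true, false, false, true]) ∪ S₂.image (fun u => glue u ![false, true, true, false]) ∪ S₂.image (fun u => glue u ![false, true, false, true]) ∪ S₂.image (fun u => glue u ![false, false, true, true])).card ≤ T.card + S₃.card + S₃.card + S₃.card + S₂.card + S₂.card + S₂.card :=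
      le_trans (Finset.card_union_le _ _) (Nat.add_le_add c6 Finset.card_image_le)
    exact le_trans (le_trans (Finset.card_union_le _ _)
      (Nat.add_le_add c7 Finset.card_image_le)) (by omega)
  · apply percolates_of_forall
    have sd0 : ∀ u ∈ T, inf (n + 4) 4 A (glue u (![false, false, false, false] : Fin 4 → Bool)) :=
      fun u hu => inf_of_mem (by rw [hA]; exact Finset.mem_union_left _ (Finset.mem_union_left _ (Finset.mem_union_left _ (Finset.mem_union_left _ (Finset.mem_union_left _ (Finset.mem_union_left _ (Finset.mem_union_left _ (Finset.mem_image_of_mem _ hu))))))))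
    have sd3 : ∀ u ∈ S₃, inf (n + 4) 4 A (glue u (![true, true, false, false] : Fin 4 → Bool)) :=
      fun u hu => inf_of_mem (by rw [hA]; exact Finset.mem_union_left _ (Finset.mem_union_left _ (Finset.mem_union_left _ (Finset.mem_union_left _ (Finset.mem_union_left _ (Finset.mem_union_left _ (Finset.mem_union_right _ (Finset.mem_image_of_mem _ hu))))))))
    have sd5 : ∀ u ∈ S₃, inf (n + 4) 4 A (glue u (![true, false, true, false] : Fin 4 → Bool)) :=
      fun u hu => inf_of_mem (by rw [hA]; exact Finset.mem_union_left _ (Finset.mem_union_left _ (Finset.mem_union_left _ (Finset.mem_union_left _ (Finset.mem_union_left _ (Finset.mem_union_right _ (Finset.mem_image_of_mem _ hu)))))))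
    have sd9 : ∀ u ∈ S₃, inf (n + 4) 4 A (glue u (![true, false, false, true] : Fin 4 → Bool)) :=
      fun u hu => inf_of_mem (by rw [hA]; exact Finset.mem_union_left _ (Finset.mem_union_left _ (Finset.mem_union_left _ (Finset.mem_union_left _ (Finset.mem_union_right _ (Finset.mem_image_of_mem _ hu))))))
    have sd6 : ∀ u ∈ S₂, inf (n + 4) 4 A (glue u (![false, true, true, false] : Fin 4 → Bool)) :=
      fun u hu => inf_of_mem (by rw [hA]; exact Finset.mem_union_left _ (Finset.mem_union_left _ (Finset.mem_union_left _ (Finset.mem_union_right _ (Finset.mem_image_of_mem _ hu)))))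
    have sd10 : ∀ u ∈ S₂, inf (n + 4) 4 A (glue u (![false, true, false, true] : Fin 4 → Bool)) :=
      fun u hu => inf_of_mem (by rw [hA]; exact Finset.mem_union_left _ (Finset.mem_union_left _ (Finset.mem_union_right _ (Finset.mem_image_of_mem _ hu))))
    have sd12 : ∀ u ∈ S₂, inf (n + 4) 4 A (glue u (![false, false, true, true] : Fin 4 → Bool)) :=
      fun u hu => inf_of_mem (by rw [hA]; exact Finset.mem_union_left _ (Finset.mem_union_right _ (Finset.mem_image_of_mem _ hu)))
    have sd15 : ∀ u ∈ S₁, inf (n + 4) 4 A (glue u (![true, true, true, true] : Fin 4 → Bool)) :=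
      fun u hu => inf_of_mem (by rw [hA]; exact Finset.mem_union_right _ (Finset.mem_image_of_mem _ hu))
    have FL0 : ∀ u, inf (n + 4) 4 A (glue u (![false, false, false, false] : Fin 4 → Bool)) :=
      engine hT (∅ : Finset (Fin 4 → Bool)) (by decide) (by decide)
        sd0
        (by simp)
    have t3x1 : ∀ u ∈ S₃, inf (n + 4) 4 A (glue u (![true, false, false, false] : Fin 4 → Bool)) :=
      token (by decide) (by decide) (by decide) (by decide) (by decide)
        (fun u _ => FL0 u)
        (sd3)
        (sd5)
        (sd9)
    have FL1 : ∀ u, inf (n + 4) 4 A (glue u (![true, false, false, false] : Fin 4 → Bool)) :=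
      engine hP3 ({![false, false, false, false]} : Finset (Fin 4 → Bool)) (by decide) (by decide)
        t3x1
        (by
        intro y hy u'
        rw [Finset.mem_singleton] at hy
        subst hy
        exact FL0 u')
    have FL3 : ∀ u, inf (n + 4) 4 A (glue u (![true, true, false, false] : Fin 4 → Bool)) :=
      engine hP3 ({![true, false, false, false]} : Finset (Fin 4 → Bool)) (by decide) (by decide)
        sd3
        (by
        intro y hy u'
        rw [Finset.mem_singleton] at hy
        subst hy
        exact FL1 u')
    have FL5 : ∀ u, inf (n + 4) 4 A (glue u (![true, false, true, false] : Fin 4 → Bool)) :=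
      engine hP3 ({![true, false, false, false]} : Finset (Fin 4 → Bool)) (by decide) (by decide)
        sd5
        (by
        intro y hy u'
        rw [Finset.mem_singleton] at hy
        subst hy
        exact FL1 u')
    have FL9 : ∀ u, inf (n + 4) 4 A (glue u (![true, false, false, true] : Fin 4 → Bool)) :=
      engine hP3 ({![true, false, false, false]} : Finset (Fin 4 → Bool)) (by decide) (by decide)
        sd9
        (by
        intro y hy u'
        rw [Finset.mem_singleton] at hy
        subst hy
        exact FL1 u')
    have t2x2 : ∀ u ∈ S₂, inf (n + 4) 4 A (glue u (![false, true, false, false] : Fin 4 → Bool)) :=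
      token (by decide) (by decide) (by decide) (by decide) (by decide)
        (fun u _ => FL3 u)
        (fun u _ => FL0 u)
        (sd6)
        (sd10)
    have FL2 : ∀ u, inf (n + 4) 4 A (glue u (![false, true, false, false] : Fin 4 → Bool)) :=
      engine hP2 ({![true, true, false, false], ![false, false, false, false]} : Finset (Fin 4 → Bool)) (by decide) (by decide)
        t2x2
        (by
        intro y hy u'
        simp only [Finset.mem_insert, Finset.mem_singleton] at hy
        rcases hy with rfl | rfl
        · exact FL3 u'
        · exact FL0 u')
    have t2x4 : ∀ u ∈ S₂, inf (n + 4) 4 A (glue u (![false, false, true, false] : Fin 4 → Bool)) :=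
      token (by decide) (by decide) (by decide) (by decide) (by decide)
        (fun u _ => FL5 u)
        (sd6)
        (fun u _ => FL0 u)
        (sd12)
    have FL4 : ∀ u, inf (n + 4) 4 A (glue u (![false, false, true, false] : Fin 4 → Bool)) :=
      engine hP2 ({![true, false, true, false], ![false, false, false, false]} : Finset (Fin 4 → Bool)) (by decide) (by decide)
        t2x4
        (by
        intro y hy u'
        simp only [Finset.mem_insert, Finset.mem_singleton] at hy
        rcases hy with rfl | rfl
        · exact FL5 u'
        · exact FL0 u')
    have FL6 : ∀ u, inf (n + 4) 4 A (glue u (![false, true, true, false] : Fin 4 → Bool)) :=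
      engine hP2 ({![false, false, true, false], ![false, true, false, false]} : Finset (Fin 4 → Bool)) (by decide) (by decide)
        sd6
        (by
        intro y hy u'
        simp only [Finset.mem_insert, Finset.mem_singleton] at hy
        rcases hy with rfl | rfl
        · exact FL4 u'
        · exact FL2 u')
    have t2x8 : ∀ u ∈ S₂, inf (n + 4) 4 A (glue u (![false, false, false, true] : Fin 4 → Bool)) :=
      token (by decide) (by decide) (by decide) (by decide) (by decide)
        (fun u _ => FL9 u)
        (sd10)
        (sd12)
        (fun u _ => FL0 u)
    have FL8 : ∀ u, inf (n + 4) 4 A (glue u (![false, false, false, true] : Fin 4 → Bool)) :=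
      engine hP2 ({![true, false, false, true], ![false, false, false, false]} : Finset (Fin 4 → Bool)) (by decide) (by decide)
        t2x8
        (by
        intro y hy u'
        simp only [Finset.mem_insert, Finset.mem_singleton] at hy
        rcases hy with rfl | rfl
        · exact FL9 u'
        · exact FL0 u')
    have FL10 : ∀ u, inf (n + 4) 4 A (glue u (![false, true, false, true] : Fin 4 → Bool)) :=
      engine hP2 ({![false, false, false, true], ![false, true, false, false]} : Finset (Fin 4 → Bool)) (by decide) (by decide)
        sd10
        (by
        intro y hy u'
        simp only [Finset.mem_insert, Finset.mem_singleton] at hy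
        rcases hy with rfl | rfl
        · exact FL8 u'
        · exact FL2 u')
    have FL12 : ∀ u, inf (n + 4) 4 A (glue u (![false, false, true, true] : Fin 4 → Bool)) :=
      engine hP2 ({![false, false, false, true], ![false, false, true, false]} : Finset (Fin 4 → Bool)) (by decide) (by decide)
        sd12
        (by
        intro y hy u'
        simp only [Finset.mem_insert, Finset.mem_singleton] at hy
        rcases hy with rfl | rfl
        · exact FL8 u'
        · exact FL4 u')
    have t1x7 : ∀ u ∈ S₁, inf (n + 4) 4 A (glue u (![true, true, true, false] : Fin 4 → Bool)) :=
      token (by decide) (by decide) (by decide) (by decide) (by decide)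
        (fun u _ => FL6 u)
        (fun u _ => FL5 u)
        (fun u _ => FL3 u)
        (sd15)
    have FL7 : ∀ u, inf (n + 4) 4 A (glue u (![true, true, true, false] : Fin 4 → Bool)) :=
      engine hP1 ({![false, true, true, false], ![true, false, true, false], ![true, true, false, false]} : Finset (Fin 4 → Bool)) (by decide) (by decide)
        t1x7
        (by
        intro y hy u'
        simp only [Finset.mem_insert, Finset.mem_singleton] at hy
        rcases hy with rfl | rfl | rfl
        · exact FL6 u'
        · exact FL5 u'
        · exact FL3 u')
    have t1x11 : ∀ u ∈ S₁, inf (n + 4) 4 A (glue u (![true, true, false, true] : Fin 4 → Bool)) :=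
      token (by decide) (by decide) (by decide) (by decide) (by decide)
        (fun u _ => FL10 u)
        (fun u _ => FL9 u)
        (sd15)
        (fun u _ => FL3 u)
    have FL11 : ∀ u, inf (n + 4) 4 A (glue u (![true, true, false, true] : Fin 4 → Bool)) :=
      engine hP1 ({![false, true, false, true], ![true, false, false, true], ![true, true, false, false]} : Finset (Fin 4 → Bool)) (by decide) (by decide)
        t1x11
        (by
        intro y hy u'
        simp only [Finset.mem_insert, Finset.mem_singleton] at hy
        rcases hy with rfl | rfl | rfl
        · exact FL10 u'
        · exact FL9 u'
        · exact FL3 u')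
    have t1x13 : ∀ u ∈ S₁, inf (n + 4) 4 A (glue u (![true, false, true, true] : Fin 4 → Bool)) :=
      token (by decide) (by decide) (by decide) (by decide) (by decide)
        (fun u _ => FL12 u)
        (sd15)
        (fun u _ => FL9 u)
        (fun u _ => FL5 u)
    have FL13 : ∀ u, inf (n + 4) 4 A (glue u (![true, false, true, true] : Fin 4 → Bool)) :=
      engine hP1 ({![false, false, true, true], ![true, false, false, true], ![true, false, true, false]} : Finset (Fin 4 → Bool)) (by decide) (by decide)
        t1x13
        (by
        intro y hy u'
        simp only [Finset.mem_insert, Finset.mem_singleton] at hy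
        rcases hy with rfl | rfl | rfl
        · exact FL12 u'
        · exact FL9 u'
        · exact FL5 u')
    have t1x14 : ∀ u ∈ S₁, inf (n + 4) 4 A (glue u (![false, true, true, true] : Fin 4 → Bool)) :=
      token (by decide) (by decide) (by decide) (by decide) (by decide)
        (sd15)
        (fun u _ => FL12 u)
        (fun u _ => FL10 u)
        (fun u _ => FL6 u)
    have FL14 : ∀ u, inf (n + 4) 4 A (glue u (![false, true, true, true] : Fin 4 → Bool)) :=
      engine hP1 ({![false, false, true, true], ![false, true, false, true], ![false, true, true, false]} : Finset (Fin 4 → Bool)) (by decide) (by decide)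
        t1x14
        (by
        intro y hy u'
        simp only [Finset.mem_insert, Finset.mem_singleton] at hy
        rcases hy with rfl | rfl | rfl
        · exact FL12 u'
        · exact FL10 u'
        · exact FL6 u')
    have FL15 : ∀ u, inf (n + 4) 4 A (glue u (![true, true, true, true] : Fin 4 → Bool)) :=
      engine (empty_perc n) ({![false, true, true, true], ![true, false, true, true], ![true, true, false, true], ![true, true, true, false]} : Finset (Fin 4 → Bool)) (by decide) (by decide)
        (by simp)
        (by
        intro y hy u'
        simp only [Finset.mem_insert, Finset.mem_singleton] at hy
        rcases hy with rfl | rfl | rfl | rfl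
        · exact FL14 u'
        · exact FL13 u'
        · exact FL11 u'
        · exact FL7 u')
    have hall : ∀ (x : Fin 4 → Bool) (u : Fin n → Bool), inf (n + 4) 4 A (glue u x) := by
      intro x u
      have hx4 : x = ![x 0, x 1, x 2, x 3] := by
        funext i
        fin_cases i <;> simp
      rw [hx4]
      rcases Bool.eq_false_or_eq_true (x 0) with h0 | h0 <;>
      rcases Bool.eq_false_or_eq_true (x 1) with h1 | h1 <;>
      rcases Bool.eq_false_or_eq_true (x 2) with h2 | h2 <;>
      rcases Bool.eq_false_or_eq_true (x 3) with h3 | h3 <;>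
        rw [h0, h1, h2, h3] <;>
        (first | exact FL0 u | exact FL1 u | exact FL2 u | exact FL3 u | exact FL4 u | exact FL5 u | exact FL6 u | exact FL7 u | exact FL8 u | exact FL9 u | exact FL10 u | exact FL11 u | exact FL12 u | exact FL13 u | exact FL14 u | exact FL15 u)
    intro v
    have hv : glue (fun i => v (Fin.castAdd 4 i)) (fun i => v (Fin.natAdd n i)) = v :=
      Fin.append_castAdd_natAdd
    rw [← hv]
    exact hall _ _
end BootPf

/-- Inductive step of the main theorem for `d ≡ 4 (mod 6)`, `d ≥ 10`.
All displayed natural-number divisions are exact. -/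
theorem stmt12 (d : ℕ) (hd : 10 ≤ d) (hmod : d % 6 = 4)
    (h4 : mQ (d - 4) 4 ≤ (d - 4) * ((d - 4) ^ 2 + 3 * (d - 4) + 14) / 24 + 1)
    (h3 : ∃ S₁ S₂ S₃ : Finset (Fin (d - 4) → Bool),
      S₁ ⊆ S₂ ∧ S₂ ⊆ S₃ ∧
      S₁.card = 1 ∧ S₂.card = (d - 4) / 2 + 1 ∧
      S₃.card = (d - 4) * (d - 1) / 6 + 1 ∧
      Percolates (d - 4) 1 S₁ ∧ Percolates (d - 4) 2 S₂ ∧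
      Percolates (d - 4) 3 S₃) :
    mQ d 4 ≤ d * (d ^ 2 + 3 * d + 14) / 24 + 1 := by
  obtain ⟨n, rfl⟩ : ∃ n, d = n + 4 := ⟨d - 4, by omega⟩
  simp only [Nat.add_sub_cancel] at h4 h3
  obtain ⟨S₁, S₂, S₃, h12, h23, hc1, hc2, hc3, hP1, hP2, hP3⟩ := h3
  have hne : {m | ∃ A : Finset (Fin n → Bool), A.card = m ∧ Percolates n 4 A}.Nonempty :=
    ⟨(Finset.univ : Finset (Fin n → Bool)).card, Finset.univ, rfl, ⟨0, rfl⟩⟩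
  obtain ⟨T, hTcard, hTperc⟩ := Nat.sInf_mem hne
  obtain ⟨A, hAcard, hAperc⟩ := BootPf.construct n T S₁ S₂ S₃ hTperc hP1 hP2 hP3
  have hmQA : mQ (n + 4) 4 ≤ A.card := Nat.sInf_le ⟨A, rfl, hAperc⟩
  obtain ⟨k, hk⟩ : ∃ k, n = 6 * k := ⟨n / 6, by omega⟩
  have h24a : 24 ∣ n * (n ^ 2 + 3 * n + 14) := by
    rcases Nat.even_or_odd k with ⟨m, hm⟩ | ⟨m, hm⟩
    · exact ⟨m * (72 * m ^ 2 + 18 * m + 7), by subst hk; subst hm; ring⟩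
    · exact ⟨(2 * m + 1) * (36 * m ^ 2 + 45 * m + 17), by subst hk; subst hm; ring⟩
  have h24e : 24 ∣ (n + 4) * ((n + 4) ^ 2 + 3 * (n + 4) + 14) := by
    rcases Nat.even_or_odd k with ⟨m, hm⟩ | ⟨m, hm⟩
    · exact ⟨(3 * m + 1) * (24 * m ^ 2 + 22 * m + 7), by subst hk; subst hm; ring⟩
    · exact ⟨(6 * m + 5) * (12 * m ^ 2 + 23 * m + 12), by subst hk; subst hm; ring⟩
  have h6b : 6 ∣ n * (n + 3) := ⟨k * (6 * k + 3), by subst hk; ring⟩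
  obtain ⟨a', ha⟩ := h24a
  obtain ⟨e', he⟩ := h24e
  obtain ⟨b', hb⟩ := h6b
  have hda : n * (n ^ 2 + 3 * n + 14) / 24 = a' := by
    rw [ha]; exact Nat.mul_div_cancel_left _ (by norm_num)
  have hde : (n + 4) * ((n + 4) ^ 2 + 3 * (n + 4) + 14) / 24 = e' := by
    rw [he]; exact Nat.mul_div_cancel_left _ (by norm_num)
  have hdb : n * (n + 3) / 6 = b' := by
    rw [hb]; exact Nat.mul_div_cancel_left _ (by norm_num)
  have hkey : 24 * e' = 24 * a' + 72 * b' + 36 * n + 168 := by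
    calc 24 * e' = (n + 4) * ((n + 4) ^ 2 + 3 * (n + 4) + 14) := he.symm
      _ = n * (n ^ 2 + 3 * n + 14) + 12 * (n * (n + 3)) + 36 * n + 168 := by ring
      _ = 24 * a' + 12 * (6 * b') + 36 * n + 168 := by rw [ha, hb]
      _ = 24 * a' + 72 * b' + 36 * n + 168 := by ring
  have h31 : n + 4 - 1 = n + 3 := by omega
  rw [h31, hdb] at hc3
  have hT4 : T.card ≤ a' + 1 := by
    have hTm : T.card = mQ n 4 := hTcard
    rw [hTm, ← hda]
    exact h4
  rw [hde]
  have hc2' : S₂.card = 3 * k + 1 := by rw [hc2]; omega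
  omega
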